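/- arXiv:2310.05655 — 4 statements merged into one kernel-verified Lean document; each statement's English description precedes it below -/
import Mathlib

section
/- Let S be a finite set, λ : S × S → ℝ≥0 a rate function (λ(a,a) = 0 for all a), with total rate Λ(a) = ∑_{b∈S} λ(a,b), and let π be a probability distribution on S. Suppose there is a bijection s : S → S that is π-isometric (π(s(a)) = π(a) for all a ∈ S), satisfies skew detailed balance (π(a)·λ(a,b) = π(s(b))·λ(s(b), s(a)) for all a, b ∈ S), and satisfies the semi-local condition (Λ(a) = Λ(s(a)) for all a ∈ S). Then for every function f : S → ℝ, ∑_{a∈S} ∑_{b∈S} λ(a,b)·(f(b) − f(a))·π(a) = 0. -/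
open scoped NNReal

/-- Skew-balance stationarity criterion: a π-isometric bijection `s` satisfying skew
detailed balance and the semi-local condition implies the generator stationarity equation. -/
theorem skew_balance_implies_generator_stationarity
    {S : Type*} [Fintype S]
    (lam : S → S → ℝ≥0) (hlam : ∀ a, lam a a = 0)
    (pi : S → ℝ≥0) (hpi : ∑ a, pi a = 1)
    (s : S ≃ S)
    (hiso : ∀ a, pi (s a) = pi a)
    (hskew : ∀ a b, pi a * lam a b = pi (s b) * lam (s b) (s a))
    (hsemi : ∀ a, ∑ b, lam a b = ∑ b, lam (s a) b)
    (f : S → ℝ) :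
    ∑ a, ∑ b, (lam a b : ℝ) * (f b - f a) * (pi a : ℝ) = 0 := by
  have key : ∀ b, ∑ a, (lam a b : ℝ) * (pi a : ℝ)
      = (pi b : ℝ) * ∑ c, (lam b c : ℝ) := by
    intro b
    have h1 : ∑ a, (lam a b : ℝ) * (pi a : ℝ)
        = ∑ a, (pi (s b) : ℝ) * (lam (s b) (s a) : ℝ) := by
      refine Finset.sum_congr rfl fun a _ => ?_
      have h := congrArg (fun x : ℝ≥0 => (x : ℝ)) (hskew a b)
      push_cast at h
      linarith
    rw [h1, ← Finset.mul_sum]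
    have h2 : ∑ a, (lam (s b) (s a) : ℝ) = ∑ c, (lam (s b) c : ℝ) :=
      Equiv.sum_comp s (fun c => (lam (s b) c : ℝ))
    rw [h2, hiso]
    congr 1
    have := hsemi b
    exact_mod_cast congrArg (fun x : ℝ≥0 => (x : ℝ)) this.symm
  have expand : ∀ a b, (lam a b : ℝ) * (f b - f a) * (pi a : ℝ)
      = (lam a b : ℝ) * (pi a : ℝ) * f b - (lam a b : ℝ) * (pi a : ℝ) * f a := by
    intro a b; ring
  simp only [expand, Finset.sum_sub_distrib]
  have hA : ∑ a, ∑ b, (lam a b : ℝ) * (pi a : ℝ) * f b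
      = ∑ b, (pi b : ℝ) * (∑ c, (lam b c : ℝ)) * f b := by
    rw [Finset.sum_comm]
    refine Finset.sum_congr rfl fun b _ => ?_
    rw [← Finset.sum_mul, key b]
  have hB : ∑ a, ∑ b, (lam a b : ℝ) * (pi a : ℝ) * f a
      = ∑ a, (pi a : ℝ) * (∑ c, (lam a c : ℝ)) * f a := by
    refine Finset.sum_congr rfl fun a _ => ?_
    rw [← Finset.sum_mul, ← Finset.sum_mul]
    ring
  rw [hA, hB, sub_self]
end

section
/- Let X be a finite set, I ⊆ X × X an irreflexive relation ('insert moves'), π : X → (0,∞) a strictly positive probability distribution on X, and g : ℝ≥0 → ℝ≥0 a balancing function, i.e. g(t) = t·g(1/t) for all t > 0. On the lifted state space S = X × {−1,+1}, writing γ^d = (γ,d), define rates: λ(γ^{+1} → η^{+1}) = g(π(η)/π(γ)) if (γ,η) ∈ I and 0 otherwise; λ(η^{−1} → γ^{−1}) = g(π(γ)/π(η)) if (γ,η) ∈ I and 0 otherwise; λ(γ^{d} → γ^{−d}) = max(0, ∑_{η∈X} λ(γ^{−d} → η^{−d}) − ∑_{η∈X} λ(γ^{d} → η^{d})); and all remaining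 rates 0. Define π̃(γ^d) = π(γ)/2 and the flip map s(γ^d) = γ^{−d}. Then skew detailed balance holds: π̃(a)·λ(a → b) = π̃(s(b))·λ(s(b) → s(a)) for all a, b ∈ S. -/
open scoped NNReal

/-- The Causal Zig-Zag rates on the lifted state space `X × Bool` (with `true = +1`,
`false = -1`) satisfy skew detailed balance with respect to the lifted target
`π̃(γ^d) = π(γ)/2` and the direction-flip map `s(γ^d) = γ^{-d}`. -/
theorem causal_zigzag_skew_detailed_balance
    {X : Type*} [Fintype X]
    (I : X → X → Prop) [DecidableRel I] (hirrefl : ∀ γ, ¬ I γ γ)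
    (pi : X → ℝ≥0) (hpos : ∀ γ, 0 < pi γ) (hsum : ∑ γ, pi γ = 1)
    (g : ℝ≥0 → ℝ≥0) (hg : ∀ t : ℝ≥0, 0 < t → g t = t * g t⁻¹)
    (lam : X × Bool → X × Bool → ℝ≥0)
    (hup : ∀ γ η : X, lam (γ, true) (η, true) = if I γ η then g (pi η / pi γ) else 0)
    (hdown : ∀ γ η : X, lam (η, false) (γ, false) = if I γ η then g (pi γ / pi η) else 0)
    (hflip : ∀ (γ : X) (d : Bool),
      (lam (γ, d) (γ, !d) : ℝ) =
        max 0 ((∑ η : X, (lam (γ, !d) (η, !d) : ℝ)) - ∑ η : X, (lam (γ, d) (η, d) : ℝ)))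
    (hzero : ∀ (γ η : X) (d : Bool), γ ≠ η → lam (γ, d) (η, !d) = 0) :
    ∀ a b : X × Bool,
      (pi a.1 / 2) * lam a b = (pi b.1 / 2) * lam (b.1, !b.2) (a.1, !a.2) := by
  have key : ∀ a b : ℝ≥0, 0 < a → 0 < b → a * g (b / a) = b * g (a / b) := by
    intro a b ha hb
    rw [hg (b / a) (div_pos hb ha), inv_div, ← mul_assoc,
      mul_div_cancel₀ _ ha.ne']
  rintro ⟨γ, d⟩ ⟨η, e⟩
  simp only
  cases d <;> cases e
  · rw [hdown η γ, show (!false) = true from rfl, hup η γ]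
    by_cases h : I η γ
    · simp only [h, if_true]
      rw [div_mul_eq_mul_div, div_mul_eq_mul_div, key _ _ (hpos γ) (hpos η)]
    · simp [h]
  · by_cases h : γ = η
    · subst h; rfl
    · rw [show lam (γ, false) (η, true) = lam (γ, false) (η, !false) from rfl,
        hzero γ η false h,
        show lam (η, !true) (γ, !false) = lam (η, false) (γ, !false) from rfl,
        hzero η γ false (Ne.symm h)]
      simp
  · by_cases h : γ = η
    · subst h; rfl
    · rw [show lam (γ, true) (η, false) = lam (γ, true) (η, !true) from rfl,
        hzero γ η true h,
        show lam (η, !false) (γ, !true) = lam (η, true) (γ, !true) from rfl,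
        hzero η γ true (Ne.symm h)]
      simp
  · rw [hup γ η, show (!true) = false from rfl, hdown γ η]
    by_cases h : I γ η
    · simp only [h, if_true]
      rw [div_mul_eq_mul_div, div_mul_eq_mul_div, key _ _ (hpos γ) (hpos η)]
    · simp [h]
end

section
/- Let X be a finite set, I ⊆ X × X an irreflexive relation, π : X → (0,∞) a strictly positive probability distribution, and g : ℝ≥0 → ℝ≥0 a balancing function, i.e. g(t) = t·g(1/t) for all t > 0. On the lifted state space S = X × {−1,+1}, define the Causal Zig-Zag rates: λ(γ^{+1} → η^{+1}) = g(π(η)/π(γ)) if (γ,η) ∈ I and 0 otherwise; λ(η^{−1} → γ^{−1}) = g(π(γ)/π(η)) if (γ,η) ∈ I and 0 otherwise; λ(γ^{d} → γ^{−d}) = max(0, ∑_{η∈X} λ(γ^{−d} → η^{−d}) − ∑_{η∈X} λ(γ^{d} → η^{d})); all remaining rates 0. Then the distribution π̃ on S given by π̃(γ^d) = π(γ)/2 satisfies the generator stationarity equation: for every f : S → ℝ, ∑_{a∈S} ∑_{b∈S} λ(a → b)·(f(b) − f(a))·π̃(a) = 0. -/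
open scoped NNReal

/-- The lifted target `π̃(γ^d) = π(γ)/2` satisfies the generator stationarity equation
for the Causal Zig-Zag rates on `X × Bool` (with `true = +1`, `false = -1`). -/
theorem causal_zigzag_stationarity
    {X : Type*} [Fintype X]
    (I : X → X → Prop) [DecidableRel I] (hirrefl : ∀ γ, ¬ I γ γ)
    (pi : X → ℝ≥0) (hpos : ∀ γ, 0 < pi γ) (hsum : ∑ γ, pi γ = 1)
    (g : ℝ≥0 → ℝ≥0) (hg : ∀ t : ℝ≥0, 0 < t → g t = t * g t⁻¹)
    (lam : X × Bool → X × Bool → ℝ≥0)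
    (hup : ∀ γ η : X, lam (γ, true) (η, true) = if I γ η then g (pi η / pi γ) else 0)
    (hdown : ∀ γ η : X, lam (η, false) (γ, false) = if I γ η then g (pi γ / pi η) else 0)
    (hflip : ∀ (γ : X) (d : Bool),
      (lam (γ, d) (γ, !d) : ℝ) =
        max 0 ((∑ η : X, (lam (γ, !d) (η, !d) : ℝ)) - ∑ η : X, (lam (γ, d) (η, d) : ℝ)))
    (hzero : ∀ (γ η : X) (d : Bool), γ ≠ η → lam (γ, d) (η, !d) = 0) :
    ∀ f : X × Bool → ℝ,
      ∑ a : X × Bool, ∑ b : X × Bool,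
        (lam a b : ℝ) * (f b - f a) * ((pi a.1 : ℝ) / 2) = 0 := by
  intro f
  -- detailed-balance style identity from the balancing function
  have hbal : ∀ p q : ℝ≥0, 0 < p → 0 < q → (g (p / q) : ℝ) * q = (p : ℝ) * g (q / p) := by
    intro p q hp hq
    have h1 : g (p / q) = (p / q) * g (q / p) := by
      have := hg (p / q) (by positivity)
      rwa [inv_div] at this
    rw [h1]
    have hq' : (q : ℝ) ≠ 0 := by exact_mod_cast hq.ne'
    push_cast
    field_simp
  -- cross-direction off-diagonal rates vanish
  have hz : ∀ (γ η : X) (d e : Bool), γ ≠ η → d ≠ e → lam (γ, d) (η, e) = 0 := by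
    intro γ η d e hne hde
    cases d <;> cases e
    · exact absurd rfl hde
    · exact hzero γ η false hne
    · exact hzero γ η true hne
    · exact absurd rfl hde
  -- key per-state balance: total inflow weighted by pi = pi * total outflow
  have key : ∀ b : X × Bool,
      ∑ a : X × Bool, (lam a b : ℝ) * (pi a.1 : ℝ)
        = (pi b.1 : ℝ) * ∑ c : X × Bool, (lam b c : ℝ) := by
    rintro ⟨γ, d⟩
    rw [Fintype.sum_prod_type, Fintype.sum_prod_type]
    simp only [Fintype.sum_bool, Finset.sum_add_distrib, mul_add]
    -- abbreviations
    set A : ℝ := ∑ η : X, (lam (γ, true) (η, true) : ℝ) with hA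
    set B : ℝ := ∑ η : X, (lam (γ, false) (η, false) : ℝ) with hB
    have cross_up : ∑ x : X, (lam (x, true) (γ, true) : ℝ) * (pi x : ℝ) = (pi γ : ℝ) * B := by
      rw [hB, Finset.mul_sum]
      apply Finset.sum_congr rfl
      intro x _
      rw [hup x γ, hdown x γ]
      split_ifs with h
      · exact hbal (pi γ) (pi x) (hpos γ) (hpos x)
      · simp
    have cross_down : ∑ x : X, (lam (x, false) (γ, false) : ℝ) * (pi x : ℝ) = (pi γ : ℝ) * A := by
      rw [hA, Finset.mul_sum]
      apply Finset.sum_congr rfl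
      intro x _
      rw [hdown γ x, hup γ x]
      split_ifs with h
      · exact hbal (pi γ) (pi x) (hpos γ) (hpos x)
      · simp
    have flip_in : ∀ e : Bool, e ≠ d →
        ∑ x : X, (lam (x, e) (γ, d) : ℝ) * (pi x : ℝ) = (lam (γ, e) (γ, d) : ℝ) * (pi γ : ℝ) := by
      intro e he
      apply Finset.sum_eq_single
      · intro x _ hx
        rw [hz x γ e d hx he]
        simp
      · intro h; exact absurd (Finset.mem_univ γ) h
    have flip_out : ∀ e : Bool, e ≠ d → ∑ x : X, (lam (γ, d) (x, e) : ℝ) = (lam (γ, d) (γ, e) : ℝ) := by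
      intro e he
      apply Finset.sum_eq_single
      · intro x _ hx
        rw [hz γ x d e (Ne.symm hx) (Ne.symm he)]
        simp
      · intro h; exact absurd (Finset.mem_univ γ) h
    have maxid : ∀ P Q C : ℝ, 0 ≤ C → C * Q + max 0 (P - Q) * C = C * (P + max 0 (Q - P)) := by
      intro P Q C hC
      rcases le_total P Q with h | h
      · rw [max_eq_left (by linarith), max_eq_right (by linarith)]; ring
      · rw [max_eq_right (by linarith), max_eq_left (by linarith)]; ring
    cases d
    · -- d = false : inflow = cross_down + flip from (γ,true)
      rw [flip_in true (by simp), flip_out true (by simp), cross_down]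
      have h1 : (lam (γ, true) (γ, false) : ℝ) = max 0 (B - A) := by
        have h := hflip γ true
        simp only [Bool.not_true] at h
        rw [← hA, ← hB] at h
        exact h
      rw [h1]
      have h2 : (lam (γ, false) (γ, true) : ℝ) = max 0 (A - B) := by
        have h := hflip γ false
        simp only [Bool.not_false] at h
        rw [← hA, ← hB] at h
        exact h
      rw [h2]
      have := maxid B A (pi γ : ℝ) (pi γ).coe_nonneg
      linarith [this]
    · -- d = true
      rw [flip_in false (by simp), flip_out false (by simp), cross_up]
      have h1 : (lam (γ, false) (γ, true) : ℝ) = max 0 (A - B) := by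
        have h := hflip γ false
        simp only [Bool.not_false] at h
        rw [← hA, ← hB] at h
        exact h
      rw [h1]
      have h2 : (lam (γ, true) (γ, false) : ℝ) = max 0 (B - A) := by
        have h := hflip γ true
        simp only [Bool.not_true] at h
        rw [← hA, ← hB] at h
        exact h
      rw [h2]
      have := maxid A B (pi γ : ℝ) (pi γ).coe_nonneg
      linarith [this]
  -- now conclude
  have expand : ∀ a b : X × Bool,
      (lam a b : ℝ) * (f b - f a) * ((pi a.1 : ℝ) / 2)
        = (lam a b : ℝ) * (pi a.1 : ℝ) * f b / 2
          - (lam a b : ℝ) * (pi a.1 : ℝ) * f a / 2 := fun a b => by ring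
  simp only [expand, Finset.sum_sub_distrib]
  rw [sub_eq_zero]
  rw [Finset.sum_comm]
  apply Finset.sum_congr rfl
  intro b _
  calc ∑ a : X × Bool, (lam a b : ℝ) * (pi a.1 : ℝ) * f b / 2
      = (∑ a : X × Bool, (lam a b : ℝ) * (pi a.1 : ℝ)) * f b / 2 := by
        rw [← Finset.sum_div, ← Finset.sum_mul]
    _ = ((pi b.1 : ℝ) * ∑ c : X × Bool, (lam b c : ℝ)) * f b / 2 := by rw [key b]
    _ = ∑ c : X × Bool, (lam b c : ℝ) * (pi b.1 : ℝ) * f b / 2 := by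
        rw [Finset.mul_sum, Finset.sum_mul, Finset.sum_div]
        exact Finset.sum_congr rfl fun c _ => by ring
end

section
/- Let G be a finite simple graph with vertex set V endowed with a linear order such that for every vertex v, the set P(v) = {u ∈ V : u < v and u is adjacent to v} of earlier neighbours of v is a clique of G. Then the number of cliques of G (vertex subsets that are pairwise adjacent, including the empty set) equals 1 + ∑_{v∈V} 2^{|P(v)|}. -/
/-- If the vertices of a finite simple graph are linearly ordered so that the earlier
neighbours `P(v)` of every vertex `v` form a clique, then the number of cliques
(including the empty set) equals `1 + ∑_v 2^{|P(v)|}`. -/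
theorem clique_count_chordal
    {V : Type*} [Fintype V] [LinearOrder V]
    (G : SimpleGraph V) [DecidableRel G.Adj]
    (hP : ∀ v : V, G.IsClique {u : V | u < v ∧ G.Adj u v}) :
    Nat.card {s : Finset V // G.IsClique (s : Set V)} =
      1 + ∑ v : V, 2 ^ (Finset.univ.filter (fun u : V => u < v ∧ G.Adj u v)).card := by
  classical
  set P : V → Finset V := fun v => Finset.univ.filter (fun u : V => u < v ∧ G.Adj u v) with hPdef
  have hmemP : ∀ v u : V, u ∈ P v ↔ (u < v ∧ G.Adj u v) := by
    intro v u; simp [hPdef]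
  have hcard : Nat.card {s : Finset V // G.IsClique (s : Set V)}
      = (Finset.univ.filter (fun s : Finset V => G.IsClique (s : Set V))).card := by
    rw [Nat.card_eq_fintype_card, Fintype.card_subtype]
  rw [hcard]
  have hsplit : (Finset.univ.filter (fun s : Finset V => G.IsClique (s : Set V)))
      = insert (∅ : Finset V)
          (Finset.univ.filter (fun s : Finset V => G.IsClique (s : Set V) ∧ s.Nonempty)) := by
    ext s
    simp only [Finset.mem_insert, Finset.mem_filter, Finset.mem_univ, true_and]
    constructor
    · intro h
      rcases s.eq_empty_or_nonempty with h0 | h0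
      · exact Or.inl h0
      · exact Or.inr ⟨h, h0⟩
    · rintro (rfl | ⟨h, _⟩)
      · simp [SimpleGraph.IsClique, Set.Pairwise]
      · exact h
  rw [hsplit, Finset.card_insert_of_notMem (by simp), add_comm]
  congr 1
  have hsum : ∑ v : V, 2 ^ (P v).card
      = (Finset.univ.sigma (fun v : V => (P v).powerset)).card := by
    rw [Finset.card_sigma]
    simp [Finset.card_powerset]
  rw [hsum]
  symm
  apply Finset.card_bij (fun (p : Σ _ : V, Finset V) _ => insert p.1 p.2)
  · rintro ⟨v, t⟩ hp
    simp only [Finset.mem_sigma, Finset.mem_univ, Finset.mem_powerset, true_and] at hp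
    simp only [Finset.mem_filter, Finset.mem_univ, true_and]
    refine ⟨?_, Finset.insert_nonempty _ _⟩
    have htsub : (t : Set V) ⊆ {u : V | u < v ∧ G.Adj u v} := by
      intro u hu
      exact (hmemP v u).1 (hp hu)
    have htcl : G.IsClique (t : Set V) := (hP v).subset htsub
    have : G.IsClique (insert v (t : Set V)) := by
      refine htcl.insert ?_
      intro b hb _
      exact ((hmemP v b).1 (hp hb)).2.symm
    simpa using this
  · rintro ⟨v, t⟩ hp ⟨w, u⟩ hq heq
    simp only [Finset.mem_sigma, Finset.mem_univ, Finset.mem_powerset, true_and] at hp hq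
    have hvw : v = w := by
      have hv : v ∈ insert w u := by rw [← heq]; exact Finset.mem_insert_self _ _
      have hw : w ∈ insert v t := by rw [heq]; exact Finset.mem_insert_self _ _
      rcases Finset.mem_insert.1 hv with h1 | h1
      · exact h1
      rcases Finset.mem_insert.1 hw with h2 | h2
      · exact h2.symm
      exact absurd (((hmemP w v).1 (hq h1)).1.trans ((hmemP v w).1 (hp h2)).1)
        (lt_irrefl v)
    subst hvw
    have hvt : v ∉ t := fun h => lt_irrefl v ((hmemP v v).1 (hp h)).1
    have hvu : v ∉ u := fun h => lt_irrefl v ((hmemP v v).1 (hq h)).1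
    have : t = u := by
      have := congrArg (fun s => Finset.erase s v) heq
      simpa [Finset.erase_insert hvt, Finset.erase_insert hvu] using this
    subst this
    rfl
  · intro s hs
    simp only [Finset.mem_filter, Finset.mem_univ, true_and] at hs
    obtain ⟨hcl, hne⟩ := hs
    refine ⟨⟨s.max' hne, s.erase (s.max' hne)⟩, ?_, ?_⟩
    · simp only [Finset.mem_sigma, Finset.mem_univ, Finset.mem_powerset, true_and]
      intro u hu
      have hus : u ∈ s := Finset.mem_of_mem_erase hu
      have hne' : u ≠ s.max' hne := Finset.ne_of_mem_erase hu
      refine (hmemP _ u).2 ⟨lt_of_le_of_ne (s.le_max' u hus) hne', ?_⟩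
      exact hcl hus (s.max'_mem hne) hne'
    · exact Finset.insert_erase (s.max'_mem hne)
end
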